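/- In 1D, let κ = [a,b] and V_N(p;κ) = span{x^j : 0 ≤ j ≤ p} with p ≥ 2. Then the constant b_κ = sup{ ‖v‖_{L²(∂κ)}/‖v‖_⋆ : v ∈ H¹(κ), v ⊥_⋆ V_N(p;κ), v ≠ 0 } equals 0; equivalently, every v ∈ H¹([a,b]) that is ⋆-orthogonal to all polynomials of degree ≤ 2 satisfies v(a) = v(b) = 0. -/

import Mathlib

/-- Proposition `prop:rbk1D`.  In 1D, on `κ = [a,b]`, every `v ∈ H¹([a,b])`
(modeled as a function differentiable on `[a,b]` with interval-integrable derivative `v'`)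
that is ⋆-orthogonal to the space `V_N(p;κ)` of polynomials of degree ≤ `p`, `p ≥ 2`, in the
inner product `⟨v,w⟩_⋆ = (Π₀v)(Π₀w)(b−a) + ∫_a^b v'w'` with `Π₀v = (1/(b−a))∫_a^b v`,
satisfies `v(a) = v(b) = 0`; hence `‖v‖_{L²(∂κ)} = 0` and the constant `b_κ` equals `0`. -/
theorem stmt_16 (a b : ℝ) (hab : a < b) (p : ℕ) (hp : 2 ≤ p)
    (v v' : ℝ → ℝ)
    (hder : ∀ x ∈ Set.Icc a b, HasDerivAt v (v' x) x)
    (hint : IntervalIntegrable v' MeasureTheory.volume a b)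
    (horth : ∀ c : Polynomial ℝ, c.natDegree ≤ p →
      ((∫ x in a..b, v x) / (b - a)) * ((∫ x in a..b, Polynomial.eval x c) / (b - a)) * (b - a)
        + ∫ x in a..b, v' x * Polynomial.eval x (Polynomial.derivative c) = 0) :
    v a = 0 ∧ v b = 0 := by
  have hle : a ≤ b := hab.le
  have hne : b - a ≠ 0 := sub_ne_zero.mpr hab.ne'
  have huIcc : Set.uIcc a b = Set.Icc a b := Set.uIcc_of_le hle
  have hderu : ∀ x ∈ Set.uIcc a b, HasDerivAt v (v' x) x := by
    rw [huIcc]; exact hder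
  -- v is continuous on [a,b], hence interval integrable
  have hcont : ContinuousOn v (Set.uIcc a b) := fun x hx =>
    (hderu x hx).continuousAt.continuousWithinAt
  have hvint : IntervalIntegrable v MeasureTheory.volume a b :=
    hcont.intervalIntegrable
  -- Test with polynomial 1 : ∫ v = 0
  have h1 := horth 1 (by simp)
  simp only [Polynomial.eval_one, Polynomial.derivative_one, Polynomial.eval_zero,
    mul_zero, intervalIntegral.integral_const, smul_eq_mul, mul_one,
    intervalIntegral.integral_zero, add_zero] at h1
  have hIv : (∫ x in a..b, v x) = 0 := by
    rw [div_self hne, mul_one, div_mul_cancel₀ _ hne] at h1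
    exact h1
  -- Test with polynomial X : v b = v a
  have hX := horth Polynomial.X (by simpa using hp.trans' (by norm_num))
  rw [hIv] at hX
  simp only [Polynomial.derivative_X, Polynomial.eval_one, mul_one, zero_div, zero_mul,
    zero_add] at hX
  have hftc : (∫ x in a..b, v' x) = v b - v a :=
    intervalIntegral.integral_eq_sub_of_hasDerivAt hderu hint
  have hvab : v b = v a := by
    have : v b - v a = 0 := by rw [← hftc]; exact hX
    linarith
  -- Test with polynomial X^2 : b * v b = a * v a
  have hX2 := horth (Polynomial.X ^ 2) (by simpa using hp)
  rw [hIv] at hX2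
  simp only [zero_div, zero_mul, zero_add] at hX2
  have hd2 : ∀ x : ℝ, Polynomial.eval x (Polynomial.derivative (Polynomial.X ^ 2 : Polynomial ℝ))
      = 2 * x := by intro x; simp [Polynomial.derivative_X_pow]; norm_num
  -- integration by parts: ∫ (v' x * x + v x) = v b * b - v a * a
  have hgder : ∀ x ∈ Set.uIcc a b, HasDerivAt (fun x => v x * x) (v' x * x + v x) x := by
    intro x hx
    have := (hderu x hx).mul (hasDerivAt_id' (x := x))
    have h' : HasDerivAt (fun y => v y * y) (v' x * x + v x * 1) x := this
    simpa using h'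
  have hgint : IntervalIntegrable (fun x => v' x * x + v x) MeasureTheory.volume a b :=
    (hint.mul_continuousOn continuousOn_id).add hvint
  have hparts : (∫ x in a..b, v' x * x + v x) = v b * b - v a * a :=
    intervalIntegral.integral_eq_sub_of_hasDerivAt hgder hgint
  have hsplit : (∫ x in a..b, v' x * x + v x)
      = (∫ x in a..b, v' x * x) + ∫ x in a..b, v x :=
    intervalIntegral.integral_add (hint.mul_continuousOn continuousOn_id) hvint
  have hIx : (∫ x in a..b, v' x * x) = v b * b - v a * a := by
    rw [← hparts, hsplit, hIv, add_zero]
  have h2 : (∫ x in a..b, v' x * (2 * x)) = 0 := by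
    rw [← hX2]
    congr 1
    ext x
    rw [hd2]
  have hI2 : (∫ x in a..b, v' x * (2 * x)) = 2 * ∫ x in a..b, v' x * x := by
    rw [← intervalIntegral.integral_const_mul]
    congr 1; ext x; ring
  have h3 := h2
  rw [hI2, hIx] at h3
  have hkey : v a * (b - a) = 0 := by linear_combination (1/2 : ℝ) * h3 - b * hvab
  have hva : v a = 0 := by
    rcases mul_eq_zero.mp hkey with h | h
    · exact h
    · exact absurd h hne
  exact ⟨hva, by rw [hvab, hva]⟩
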